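/- Let L ∈ ℝ^{n×n} be symmetric, let y ∈ ℝⁿ, and set t := max(0, −λ_min(Diag(y) − L)), where λ_min denotes the smallest eigenvalue of a symmetric matrix. Then for every real symmetric positive semidefinite matrix X ∈ ℝ^{n×n} with X_{ii} = 1 for all i, it holds that ⟨L, X⟩ ≤ Σ_i y_i + n·t; that is, the radially projected dual vector yields a valid upper bound on the Max-Cut SDP objective. -/

import Mathlib

/-- The radially projected dual vector yields a valid upper bound on the
Max-Cut SDP objective: with `t := max(0, -λ_min(Diag(y) - L))`, every symmetric PSD `X` with
unit diagonal satisfies `⟨L, X⟩ ≤ Σ_i y_i + n·t`. -/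
theorem radial_projection_upper_bound {n : ℕ}
    (L : Matrix (Fin n) (Fin n) ℝ) (hL : L.IsSymm) (y : Fin n → ℝ)
    (hS : (Matrix.diagonal y - L).IsHermitian)
    (t : ℝ) (ht : t = max 0 (-(⨅ i, hS.eigenvalues i))) :
    ∀ X : Matrix (Fin n) (Fin n) ℝ, X.PosSemidef → (∀ i, X i i = 1) →
      ∑ i, ∑ j, L i j * X i j ≤ (∑ i, y i) + n * t := by
  intro X hX hXd
  set A := Matrix.diagonal y - L with hA
  set M := A + t • (1 : Matrix (Fin n) (Fin n) ℝ) with hMdef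
  -- entries of shifted eigenvalues are nonnegative
  have hev : ∀ i, 0 ≤ hS.eigenvalues i + t := by
    intro i
    have h1 : (⨅ j, hS.eigenvalues j) ≤ hS.eigenvalues i :=
      ciInf_le (Set.Finite.bddBelow (Set.finite_range _)) i
    have h2 : -(⨅ j, hS.eigenvalues j) ≤ t := by rw [ht]; exact le_max_right _ _
    linarith
  -- M is PSD
  have hM : M.PosSemidef := by
    have hU := hS.spectral_theorem
    set U : Matrix (Fin n) (Fin n) ℝ := (hS.eigenvectorUnitary : Matrix (Fin n) (Fin n) ℝ)
    have hUU : U * (star U) = 1 := by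
      simpa [Matrix.star_eq_conjTranspose] using
        Matrix.mem_unitaryGroup_iff.mp hS.eigenvectorUnitary.2
    have hMeq : M = U * Matrix.diagonal (fun i => hS.eigenvalues i + t) * (star U) := by
      have : Matrix.diagonal (fun i => hS.eigenvalues i + t)
          = Matrix.diagonal (RCLike.ofReal ∘ hS.eigenvalues) + t • (1 : Matrix (Fin n) (Fin n) ℝ) := by
        ext i j
        by_cases h : i = j <;> simp [h, Matrix.diagonal, Matrix.one_apply]
      rw [hMdef, this, Matrix.mul_add, Matrix.add_mul]
      congr 1
      rw [Matrix.mul_smul, Matrix.mul_one, Matrix.smul_mul, hUU]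
    rw [hMeq]
    exact (Matrix.PosSemidef.diagonal hev).mul_mul_conjTranspose_same U
  -- trace inequality
  have key : 0 ≤ ∑ i, ∑ j, M i j * X i j := by
    obtain ⟨B, hB⟩ : ∃ B : Matrix (Fin n) (Fin n) ℝ, X = B.conjTranspose * B := by
      open scoped MatrixOrder in
      obtain ⟨Y, hY, -, hYX⟩ := CFC.exists_sqrt_of_isSelfAdjoint_of_quasispectrumRestricts
        hX.isHermitian (QuasispectrumRestricts.nnreal_of_nonneg hX.nonneg)
      refine ⟨Y, ?_⟩
      rw [← Matrix.star_eq_conjTranspose, hY.star_eq]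
      simpa using hYX.symm
    have h0 : ∀ k, 0 ≤ ∑ i, B k i * ∑ j, M i j * B k j := by
      intro k
      simpa [dotProduct, Matrix.mulVec, star_trivial] using hM.dotProduct_mulVec_nonneg (fun j => B k j)
    calc (0:ℝ) ≤ ∑ k, ∑ i, B k i * ∑ j, M i j * B k j :=
          Finset.sum_nonneg fun k _ => h0 k
      _ = ∑ i, ∑ j, M i j * X i j := by
          rw [hB]
          simp only [Matrix.mul_apply, Matrix.conjTranspose_apply, star_trivial,
            Finset.mul_sum, Finset.sum_mul]
          rw [Finset.sum_comm]
          refine Finset.sum_congr rfl fun i _ => ?_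
          rw [Finset.sum_comm]
          refine Finset.sum_congr rfl fun j _ => ?_
          refine Finset.sum_congr rfl fun k _ => ?_
          ring
  -- expand M
  have expand : ∑ i, ∑ j, M i j * X i j
      = (∑ i, y i) + n * t - ∑ i, ∑ j, L i j * X i j := by
    have : ∀ i j, M i j * X i j = (Matrix.diagonal y) i j * X i j
        + t * (1 : Matrix (Fin n) (Fin n) ℝ) i j * X i j - L i j * X i j := by
      intro i j
      simp [hMdef, hA, Matrix.sub_apply, Matrix.add_apply, Matrix.smul_apply]
      ring
    simp only [this, Finset.sum_sub_distrib, Finset.sum_add_distrib]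
    congr 1
    congr 1
    · refine Finset.sum_congr rfl fun i _ => ?_
      simp [Matrix.diagonal, Finset.sum_ite_eq', hXd i]
    · have h1 : ∀ i, ∑ j, t * (1 : Matrix (Fin n) (Fin n) ℝ) i j * X i j = t := by
        intro i
        rw [Finset.sum_eq_single i]
        · simp [Matrix.one_apply, hXd i]
        · intro j _ hj; simp [Matrix.one_apply, (Ne.symm hj)]
        · simp
      calc ∑ i, ∑ j, t * (1 : Matrix (Fin n) (Fin n) ℝ) i j * X i j
          = ∑ _i : Fin n, t := Finset.sum_congr rfl fun i _ => h1 i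
        _ = (n : ℝ) * t := by simp [mul_comm]
  linarith [key, expand.symm ▸ key]
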